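/- (Example 3.3, infinitesimal cocycle.) Let A = ℂ[a,ā] be the commutative polynomial algebra in two variables with monomial basis {a^kā^l}, B = ℂ[b], and let Ψ : A⊗B → B⊗A be the flip, Ψ(x⊗y) = y⊗x. Define ℂ-linear maps μ_A^{(1)} : A⊗A → A and Ψ^{(1)} : A⊗B → B⊗A by μ_A^{(1)}(a^kā^l ⊗ a^rā^s) = l·r·a^{k+r}ā^{l+s} and Ψ^{(1)}(a^kā^l ⊗ b^r) = l·r·b^r⊗a^kā^l − k·r·b^{r+1}⊗a^{k−1}ā^{l+1} (the second term being absent when k = 0). Then the triple (μ_A^{(1)}, Ψ^{(1)}, μ_B^{(1)} = 0) satisfies the 2-cocycle conditions (E1)–(E4), and hence defines an infinitesimal deformation of the tensor product factorisation X(B,A). -/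

import Mathlib

/-!
STATEMENT 14 (Example 3.3, infinitesimal cocycle): for the tensor-product
factorisation of `A = ℂ[a,ā]` (monomial basis `a^k ā^l`) and `B = ℂ[b]` with
the flip twisting `Ψ(x ⊗ y) = y ⊗ x`, the maps
`μ_A⁽¹⁾(a^k ā^l ⊗ a^r ā^s) = l·r·a^{k+r} ā^{l+s}` and
`Ψ⁽¹⁾(a^k ā^l ⊗ b^r) = l·r·b^r ⊗ a^k ā^l − k·r·b^{r+1} ⊗ a^{k−1} ā^{l+1}`
together with `μ_B⁽¹⁾ = 0` satisfy the 2-cocycle conditions (E1)–(E4), hence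
define an infinitesimal deformation of `X(B,A)`.
-/

open TensorProduct

section Defs

variable {k : Type*} [CommRing k]
variable {A B : Type*} [AddCommGroup A] [Module k A] [AddCommGroup B] [Module k B]

/-- `(id_B ⊗ μ) ∘ (ψ ⊗ id_A)` as a map `A ⊗ (B ⊗ A) → B ⊗ A`. -/
noncomputable def twL (μ : A ⊗[k] A →ₗ[k] A) (ψ : A ⊗[k] B →ₗ[k] B ⊗[k] A) :
    A ⊗[k] (B ⊗[k] A) →ₗ[k] B ⊗[k] A :=
  LinearMap.lTensor B μ ∘ₗ (TensorProduct.assoc k B A A).toLinearMap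
    ∘ₗ LinearMap.rTensor A ψ ∘ₗ (TensorProduct.assoc k A B A).symm.toLinearMap

/-- `(ν ⊗ id_A) ∘ (id_B ⊗ ψ)` as a map `(B ⊗ A) ⊗ B → B ⊗ A`. -/
noncomputable def twR (ν : B ⊗[k] B →ₗ[k] B) (ψ : A ⊗[k] B →ₗ[k] B ⊗[k] A) :
    (B ⊗[k] A) ⊗[k] B →ₗ[k] B ⊗[k] A :=
  LinearMap.rTensor A ν ∘ₗ (TensorProduct.assoc k B B A).symm.toLinearMap
    ∘ₗ LinearMap.lTensor B ψ ∘ₗ (TensorProduct.assoc k B A B).toLinearMap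

end Defs

/-- `A = ℂ[a,ā]`, the commutative polynomial algebra in two variables, as the
monoid algebra on `ℕ × ℕ`; the monomial `a^k ā^l` is `Finsupp.single (k,l) 1`. -/
abbrev Apoly : Type := AddMonoidAlgebra ℂ (ℕ × ℕ)

/-- `B = ℂ[b]`; the monomial `b^r` is `Finsupp.single r 1`. -/
abbrev Bpoly : Type := AddMonoidAlgebra ℂ ℕ

/-- `μ_A⁽¹⁾(a^k ā^l ⊗ a^r ā^s) = l·r·a^{k+r} ā^{l+s}`. -/
noncomputable def mu1 : Apoly ⊗[ℂ] Apoly →ₗ[ℂ] Apoly :=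
  TensorProduct.lift <|
    (Finsupp.lift (Apoly →ₗ[ℂ] Apoly) ℂ (ℕ × ℕ) fun p =>
      (Finsupp.lift Apoly ℂ (ℕ × ℕ) fun p' =>
        ((p.2 * p'.1 : ℕ) : ℂ) • AddMonoidAlgebra.single (p.1 + p'.1, p.2 + p'.2) (1 : ℂ))
        ∘ₗ (AddMonoidAlgebra.coeffLinearEquiv ℂ).toLinearMap) ∘ₗ (AddMonoidAlgebra.coeffLinearEquiv ℂ).toLinearMap

/-- `Ψ⁽¹⁾(a^k ā^l ⊗ b^r) = l·r·b^r ⊗ a^k ā^l − k·r·b^{r+1} ⊗ a^{k−1} ā^{l+1}`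
(the second term being absent when `k = 0`). -/
noncomputable def psi1 : Apoly ⊗[ℂ] Bpoly →ₗ[ℂ] Bpoly ⊗[ℂ] Apoly :=
  TensorProduct.lift <|
    (Finsupp.lift (Bpoly →ₗ[ℂ] Bpoly ⊗[ℂ] Apoly) ℂ (ℕ × ℕ) fun p =>
      (Finsupp.lift (Bpoly ⊗[ℂ] Apoly) ℂ ℕ fun r =>
        ((p.2 * r : ℕ) : ℂ) •
            ((AddMonoidAlgebra.single r (1 : ℂ) : Bpoly)
              ⊗ₜ[ℂ] (AddMonoidAlgebra.single p (1 : ℂ) : Apoly))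
          - ((p.1 * r : ℕ) : ℂ) •
            ((AddMonoidAlgebra.single (r + 1) (1 : ℂ) : Bpoly)
              ⊗ₜ[ℂ] (AddMonoidAlgebra.single (p.1 - 1, p.2 + 1) (1 : ℂ) : Apoly)))
        ∘ₗ (AddMonoidAlgebra.coeffLinearEquiv ℂ).toLinearMap) ∘ₗ (AddMonoidAlgebra.coeffLinearEquiv ℂ).toLinearMap

-- helper lemmas
lemma lift_single'' {M : Type*} [AddCommMonoid M] [Module ℂ M] {X : Type*}
    (f : X → M) (a : X) (b : ℂ) :
    (Finsupp.lift M ℂ X f) (Finsupp.single a b) = b • f a := by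
  rw [Finsupp.lift_apply, Finsupp.sum_single_index (by simp)]

lemma mu1_single (p q : ℕ × ℕ) (c d : ℂ) :
    mu1 (AddMonoidAlgebra.single p c ⊗ₜ[ℂ] AddMonoidAlgebra.single q d)
      = (c * (d * ((p.2 * q.1 : ℕ) : ℂ))) • AddMonoidAlgebra.single (p.1 + q.1, p.2 + q.2) (1:ℂ) := by
  rw [mu1, TensorProduct.lift.tmul]; simp only [LinearMap.comp_apply, LinearEquiv.coe_coe]; erw [lift_single'', LinearMap.smul_apply, lift_single'']
  rw [smul_smul, smul_smul, mul_assoc]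

lemma psi1_single (p : ℕ × ℕ) (r : ℕ) (c d : ℂ) :
    psi1 (AddMonoidAlgebra.single p c ⊗ₜ[ℂ] AddMonoidAlgebra.single r d)
      = (c * (d * ((p.2 * r : ℕ) : ℂ))) •
          ((AddMonoidAlgebra.single r (1:ℂ) : Bpoly) ⊗ₜ[ℂ] (AddMonoidAlgebra.single p (1:ℂ) : Apoly))
        - (c * (d * ((p.1 * r : ℕ) : ℂ))) •
          ((AddMonoidAlgebra.single (r+1) (1:ℂ) : Bpoly) ⊗ₜ[ℂ] (AddMonoidAlgebra.single (p.1-1, p.2+1) (1:ℂ) : Apoly)) := by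
  rw [psi1, TensorProduct.lift.tmul]; simp only [LinearMap.comp_apply, LinearEquiv.coe_coe]; erw [lift_single'', LinearMap.smul_apply, lift_single'']
  rw [smul_sub, smul_sub, smul_smul, smul_smul, smul_smul, smul_smul, mul_assoc, mul_assoc]

lemma single_mul_single' (p q : ℕ × ℕ) (c d : ℂ) :
    (AddMonoidAlgebra.single p c : Apoly) * AddMonoidAlgebra.single q d
      = AddMonoidAlgebra.single (p.1 + q.1, p.2 + q.2) (c * d) :=
  AddMonoidAlgebra.single_mul_single ..

lemma single_mul_singleB (p q : ℕ) (c d : ℂ) :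
    (AddMonoidAlgebra.single p c : Bpoly) * AddMonoidAlgebra.single q d
      = AddMonoidAlgebra.single (p + q) (c * d) :=
  AddMonoidAlgebra.single_mul_single ..

lemma succ_add_sub_one (a b : ℕ) : a + 1 + b - 1 = a + b := by omega

lemma single_smul {δ : Type*} (a : δ) (c : ℂ) :
    (AddMonoidAlgebra.single a c : AddMonoidAlgebra ℂ δ) = c • AddMonoidAlgebra.single a 1 := by
  rw [AddMonoidAlgebra.smul_single', mul_one]

lemma ext3 {α β γ : Type*} {M : Type*} [AddCommMonoid M] [Module ℂ M]
    (L R : AddMonoidAlgebra ℂ α ⊗[ℂ] (AddMonoidAlgebra ℂ β ⊗[ℂ] AddMonoidAlgebra ℂ γ) →ₗ[ℂ] M)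
    (h : ∀ p q r, L (AddMonoidAlgebra.single p 1 ⊗ₜ[ℂ] (AddMonoidAlgebra.single q 1 ⊗ₜ[ℂ] AddMonoidAlgebra.single r 1))
        = R (AddMonoidAlgebra.single p 1 ⊗ₜ[ℂ] (AddMonoidAlgebra.single q 1 ⊗ₜ[ℂ] AddMonoidAlgebra.single r 1))) :
    L = R := by
  apply TensorProduct.ext
  apply AddMonoidAlgebra.lhom_ext'; intro p; apply LinearMap.ext; intro c
  apply TensorProduct.ext
  apply AddMonoidAlgebra.lhom_ext'; intro q; apply LinearMap.ext; intro d
  apply AddMonoidAlgebra.lhom_ext'; intro r; apply LinearMap.ext; intro e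
  show L _ = R _
  simp only [AddMonoidAlgebra.lsingle_apply, TensorProduct.mk_apply]
  rw [single_smul p c, single_smul q d, single_smul r e]
  simp only [map_smul, LinearMap.smul_apply, tmul_smul, smul_tmul]
  exact congrArg (fun z => e • d • c • z) (h p q r)

-- the simp set for evaluating everything on pure tensors
noncomputable def psiMap : Apoly ⊗[ℂ] Bpoly →ₗ[ℂ] Bpoly ⊗[ℂ] Apoly :=
  (TensorProduct.comm ℂ Apoly Bpoly).toLinearMap

lemma E1map :
    LinearMap.mul' ℂ Apoly ∘ₗ LinearMap.lTensor Apoly mu1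
      - mu1 ∘ₗ LinearMap.rTensor Apoly (LinearMap.mul' ℂ Apoly)
          ∘ₗ (TensorProduct.assoc ℂ Apoly Apoly Apoly).symm.toLinearMap
      + mu1 ∘ₗ LinearMap.lTensor Apoly (LinearMap.mul' ℂ Apoly)
      - LinearMap.mul' ℂ Apoly ∘ₗ LinearMap.rTensor Apoly mu1
          ∘ₗ (TensorProduct.assoc ℂ Apoly Apoly Apoly).symm.toLinearMap
      = 0 := by
  apply ext3
  intro p q r
  simp only [LinearMap.sub_apply, LinearMap.add_apply, LinearMap.comp_apply,
    LinearMap.lTensor_tmul, LinearMap.rTensor_tmul, LinearEquiv.coe_coe,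
    TensorProduct.assoc_symm_tmul, LinearMap.mul'_apply, mu1_single,
    single_mul_single', map_smul, smul_mul_assoc, mul_smul_comm,
    LinearMap.zero_apply, one_mul, mul_one, add_assoc]
  push_cast
  module

lemma E3map :
    twL (LinearMap.mul' ℂ Apoly) psi1 ∘ₗ LinearMap.lTensor Apoly psiMap
      + twL (LinearMap.mul' ℂ Apoly) psiMap ∘ₗ LinearMap.lTensor Apoly psi1
      + twL mu1 psiMap ∘ₗ LinearMap.lTensor Apoly psiMap
      = psi1 ∘ₗ LinearMap.rTensor Bpoly (LinearMap.mul' ℂ Apoly)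
          ∘ₗ (TensorProduct.assoc ℂ Apoly Apoly Bpoly).symm.toLinearMap
        + psiMap ∘ₗ LinearMap.rTensor Bpoly mu1
          ∘ₗ (TensorProduct.assoc ℂ Apoly Apoly Bpoly).symm.toLinearMap := by
  apply ext3
  intro p q t
  obtain ⟨k, l⟩ := p
  obtain ⟨r, s⟩ := q
  rcases k with _ | k <;> rcases r with _ | r <;>
    · simp only [twL, psiMap, LinearMap.add_apply, LinearMap.comp_apply, LinearEquiv.coe_coe,
        LinearMap.lTensor_tmul, LinearMap.rTensor_tmul, TensorProduct.assoc_symm_tmul,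
        TensorProduct.assoc_tmul, TensorProduct.comm_tmul, LinearMap.mul'_apply,
        mu1_single, psi1_single, single_mul_single', map_sub, map_smul, map_add, map_zero,
        TensorProduct.sub_tmul, TensorProduct.tmul_sub, TensorProduct.smul_tmul,
        TensorProduct.tmul_smul, smul_mul_assoc, mul_smul_comm, one_mul, mul_one,
        succ_add_sub_one, Nat.add_sub_cancel, Nat.succ_sub_one, Nat.zero_sub,
        Nat.cast_zero, zero_mul, mul_zero, zero_smul, smul_zero, sub_zero, zero_sub,
        TensorProduct.zero_tmul, TensorProduct.tmul_zero, add_zero, zero_add]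
      push_cast
      try simp only [Nat.add_comm, Nat.add_left_comm, Nat.add_assoc]
      module

lemma E4map :
    twR (LinearMap.mul' ℂ Bpoly) psi1 ∘ₗ LinearMap.rTensor Bpoly psiMap
          ∘ₗ (TensorProduct.assoc ℂ Apoly Bpoly Bpoly).symm.toLinearMap
      + twR (LinearMap.mul' ℂ Bpoly) psiMap ∘ₗ LinearMap.rTensor Bpoly psi1
          ∘ₗ (TensorProduct.assoc ℂ Apoly Bpoly Bpoly).symm.toLinearMap
      + twR (0 : Bpoly ⊗[ℂ] Bpoly →ₗ[ℂ] Bpoly) psiMap ∘ₗ LinearMap.rTensor Bpoly psiMap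
          ∘ₗ (TensorProduct.assoc ℂ Apoly Bpoly Bpoly).symm.toLinearMap
      = psi1 ∘ₗ LinearMap.lTensor Apoly (LinearMap.mul' ℂ Bpoly) := by
  apply ext3
  intro p u v
  simp only [twR, psiMap, LinearMap.add_apply, LinearMap.comp_apply, LinearEquiv.coe_coe,
    LinearMap.lTensor_tmul, LinearMap.rTensor_tmul, TensorProduct.assoc_symm_tmul,
    TensorProduct.assoc_tmul, TensorProduct.comm_tmul, LinearMap.mul'_apply,
    psi1_single, single_mul_singleB, map_sub, map_smul, map_add, LinearMap.zero_apply,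
    TensorProduct.sub_tmul, TensorProduct.tmul_sub, TensorProduct.smul_tmul,
    TensorProduct.tmul_smul, smul_mul_assoc, mul_smul_comm, zero_tmul, tmul_zero,
    one_mul, mul_one]
  push_cast
  simp only [Nat.add_comm, Nat.add_left_comm, Nat.add_assoc]
  module

/-- Example 3.3, infinitesimal cocycle: the triple
`(μ_A⁽¹⁾, Ψ⁽¹⁾, μ_B⁽¹⁾ = 0)` satisfies the 2-cocycle conditions (E1)–(E4). -/
theorem polynomial_infinitesimal_cocycle :
    letI μA := LinearMap.mul' ℂ Apoly
    letI μB := LinearMap.mul' ℂ Bpoly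
    letI ψ : Apoly ⊗[ℂ] Bpoly →ₗ[ℂ] Bpoly ⊗[ℂ] Apoly :=
      (TensorProduct.comm ℂ Apoly Bpoly).toLinearMap
    letI ν₁ : Bpoly ⊗[ℂ] Bpoly →ₗ[ℂ] Bpoly := 0
    -- (E1)
    (∀ x y z : Apoly,
        x * mu1 (y ⊗ₜ[ℂ] z) - mu1 ((x * y) ⊗ₜ[ℂ] z)
          + mu1 (x ⊗ₜ[ℂ] (y * z)) - mu1 (x ⊗ₜ[ℂ] y) * z = 0) ∧
    -- (E2), for μ_B⁽¹⁾ = 0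
    (∀ u v w : Bpoly,
        u * ν₁ (v ⊗ₜ[ℂ] w) - ν₁ ((u * v) ⊗ₜ[ℂ] w)
          + ν₁ (u ⊗ₜ[ℂ] (v * w)) - ν₁ (u ⊗ₜ[ℂ] v) * w = 0) ∧
    -- (E3)
    (∀ (x y : Apoly) (u : Bpoly),
        twL μA psi1 (x ⊗ₜ[ℂ] ψ (y ⊗ₜ[ℂ] u))
          + twL μA ψ (x ⊗ₜ[ℂ] psi1 (y ⊗ₜ[ℂ] u))
          + twL mu1 ψ (x ⊗ₜ[ℂ] ψ (y ⊗ₜ[ℂ] u))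
        = psi1 ((x * y) ⊗ₜ[ℂ] u) + ψ (mu1 (x ⊗ₜ[ℂ] y) ⊗ₜ[ℂ] u)) ∧
    -- (E4)
    (∀ (x : Apoly) (u v : Bpoly),
        twR μB psi1 (ψ (x ⊗ₜ[ℂ] u) ⊗ₜ[ℂ] v)
          + twR μB ψ (psi1 (x ⊗ₜ[ℂ] u) ⊗ₜ[ℂ] v)
          + twR ν₁ ψ (ψ (x ⊗ₜ[ℂ] u) ⊗ₜ[ℂ] v)
        = psi1 (x ⊗ₜ[ℂ] (u * v)) + ψ (x ⊗ₜ[ℂ] ν₁ (u ⊗ₜ[ℂ] v))) := by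
  refine ⟨fun x y z => ?_, fun u v w => by simp, fun x y u => ?_, fun x u v => ?_⟩
  · have h := LinearMap.congr_fun E1map (x ⊗ₜ[ℂ] (y ⊗ₜ[ℂ] z))
    simpa only [LinearMap.sub_apply, LinearMap.add_apply, LinearMap.comp_apply,
      LinearMap.lTensor_tmul, LinearMap.rTensor_tmul, LinearEquiv.coe_coe,
      TensorProduct.assoc_symm_tmul, LinearMap.mul'_apply, LinearMap.zero_apply] using h
  · have h := LinearMap.congr_fun E3map (x ⊗ₜ[ℂ] (y ⊗ₜ[ℂ] u))
    simpa only [psiMap, LinearMap.add_apply, LinearMap.comp_apply, LinearMap.lTensor_tmul,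
      LinearMap.rTensor_tmul, LinearEquiv.coe_coe, TensorProduct.assoc_symm_tmul,
      LinearMap.mul'_apply] using h
  · have h := LinearMap.congr_fun E4map (x ⊗ₜ[ℂ] (u ⊗ₜ[ℂ] v))
    simpa only [psiMap, LinearMap.add_apply, LinearMap.comp_apply, LinearMap.lTensor_tmul,
      LinearMap.rTensor_tmul, LinearEquiv.coe_coe, TensorProduct.assoc_symm_tmul,
      LinearMap.mul'_apply, LinearMap.zero_apply, TensorProduct.tmul_zero, map_zero,
      add_zero] using h
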